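/- In the men-proposing Deferred Acceptance algorithm, once a woman receives a proposal she is matched in every subsequent round, and the partner she holds only (weakly) improves over the course of the algorithm. -/
import Mathlib


open Finset

/-- A stable matching instance: `n` men and `n` women; `mrank m w` is the
(0-indexed) rank of woman `w` in man `m`'s strict preference list (lower = more
preferred); `wrank w m` analogously. -/
structure SMInstance (n : ℕ) where
  mrank : Fin n → Fin n → Fin n
  wrank : Fin n → Fin n → Fin n
  mbij : ∀ m, Function.Bijective (mrank m)
  wbij : ∀ w, Function.Bijective (wrank w)

namespace SMInstance

variable {n : ℕ}

/-- `(m, w)` is a blocking pair of the perfect matching `μ`. -/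
def Blocking (I : SMInstance n) (μ : Equiv.Perm (Fin n)) (m w : Fin n) : Prop :=
  μ m ≠ w ∧ I.mrank m w < I.mrank m (μ m) ∧ I.wrank w m < I.wrank w (μ.symm w)

/-- A matching is stable if it admits no blocking pair. -/
def Stable (I : SMInstance n) (μ : Equiv.Perm (Fin n)) : Prop :=
  ∀ m w, ¬ I.Blocking μ m w

/-- Total (1-indexed) rank of partners over men. -/
def SM (I : SMInstance n) (μ : Equiv.Perm (Fin n)) : ℤ :=
  ∑ m : Fin n, (((I.mrank m (μ m) : ℕ) : ℤ) + 1)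

/-- Total (1-indexed) rank of partners over women. -/
def SW (I : SMInstance n) (μ : Equiv.Perm (Fin n)) : ℤ :=
  ∑ w : Fin n, (((I.wrank w (μ.symm w) : ℕ) : ℤ) + 1)

/-- The sex-equality cost of a matching. -/
def cost (I : SMInstance n) (μ : Equiv.Perm (Fin n)) : ℤ :=
  |I.SM μ - I.SW μ|

end SMInstance

/-- in a run of men-proposing Deferred Acceptance (described by the
held partner `held t w` of each woman at round `t` and the set `props t w` of men
proposing to `w` at round `t`, where each woman keeps the best man among her
current partner and her proposers), once a woman receives a proposal she is
matched in every subsequent round, and her held partner weakly improves. -/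
theorem da_woman_monotone {n : ℕ} (I : SMInstance n)
    (held : ℕ → Fin n → Option (Fin n)) (props : ℕ → Fin n → Finset (Fin n))
    (hstart : ∀ w, held 0 w = none)
    (hstep : ∀ t w m, held (t + 1) w = some m ↔
      ((m ∈ props t w ∨ held t w = some m) ∧
        ∀ m', (m' ∈ props t w ∨ held t w = some m') → I.wrank w m ≤ I.wrank w m')) :
    (∀ t w m, held t w = some m → ∀ t', t ≤ t' →
        ∃ m', held t' w = some m' ∧ I.wrank w m' ≤ I.wrank w m) ∧
      (∀ t w, (props t w).Nonempty → ∀ t', t < t' → ∃ m', held t' w = some m') := by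

  -- key step lemma
  have key : ∀ t w, ((props t w).Nonempty ∨ ∃ m0, held t w = some m0) →
      ∃ m, held (t+1) w = some m ∧
        ∀ m', (m' ∈ props t w ∨ held t w = some m') → I.wrank w m ≤ I.wrank w m' := by
    intro t w h
    set S : Finset (Fin n) := props t w ∪ (held t w).toFinset with hS
    have hmem : ∀ m, m ∈ S ↔ (m ∈ props t w ∨ held t w = some m) := by
      intro m
      simp [hS, Finset.mem_union, Option.mem_toFinset, eq_comm]
    have hne : S.Nonempty := by
      rcases h with ⟨m, hm⟩ | ⟨m, hm⟩
      · exact ⟨m, (hmem m).2 (Or.inl hm)⟩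
      · exact ⟨m, (hmem m).2 (Or.inr hm)⟩
    obtain ⟨m, hmS, hmin⟩ := S.exists_min_image (fun m => I.wrank w m) hne
    refine ⟨m, ?_, ?_⟩
    · exact (hstep t w m).2 ⟨(hmem m).1 hmS, fun m' hm' => hmin m' ((hmem m').2 hm')⟩
    · exact fun m' hm' => hmin m' ((hmem m').2 hm')
  have part1 : ∀ t w m, held t w = some m → ∀ t', t ≤ t' →
      ∃ m', held t' w = some m' ∧ I.wrank w m' ≤ I.wrank w m := by
    intro t w m hm t' ht'
    induction t' , ht' using Nat.le_induction with
    | base => exact ⟨m, hm, le_refl _⟩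
    | succ k hk ih =>
      obtain ⟨m', hm', hle⟩ := ih
      obtain ⟨m'', hm'', hmin⟩ := key k w (Or.inr ⟨m', hm'⟩)
      exact ⟨m'', hm'', le_trans (hmin m' (Or.inr hm')) hle⟩
  refine ⟨part1, ?_⟩
  intro t w hne t' ht'
  obtain ⟨m, hm, _⟩ := key t w (Or.inl hne)
  obtain ⟨m', hm', _⟩ := part1 (t+1) w m hm t' ht'
  exact ⟨m', hm'⟩
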